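/- Let J̃ be a para-Hermitian structure on V. Then for every algebraic curvature tensor A on V satisfying the para-Kaehler identity A(x,y,z,w) = −A(J̃x,J̃y,z,w) for all x,y,z,w, there exists Θ ∈ S²₋(V*)⊗S²(V*) with K_{J̃}Θ = 0 and LΘ = A. -/

import Mathlib

set_option maxHeartbeats 4000000
set_option synthInstance.maxHeartbeats 400000

/-- Para-Kaehler analogue of surjectivity: every algebraic curvature tensor satisfying
the para-Kaehler identity is of the form `LΘ` for some `Θ ∈ S²₋(V*)⊗S²(V*)` with
`K_{J̃}Θ = 0`. -/
theorem L_surjective_onto_paraKaehler_tensors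
    {V : Type*} [AddCommGroup V] [Module ℝ V] [FiniteDimensional ℝ V]
    {n : ℕ} (hn : 2 ≤ n) (hdim : Module.finrank ℝ V = 2 * n)
    (B : V →ₗ[ℝ] V →ₗ[ℝ] ℝ)
    (hBsymm : ∀ x y : V, B x y = B y x)
    -- neutral signature (n, n)
    (b : Module.Basis (Fin (2 * n)) ℝ V)
    (hb : ∀ i j : Fin (2 * n),
      B (b i) (b j) = if i = j then (if (i : ℕ) < n then 1 else -1) else 0)
    (Jt : V →ₗ[ℝ] V)
    (hJ2 : ∀ x : V, Jt (Jt x) = x)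
    (hJi : ∀ x y : V, B (Jt x) (Jt y) = - B x y)
    (A : V →ₗ[ℝ] V →ₗ[ℝ] V →ₗ[ℝ] V →ₗ[ℝ] ℝ)
    (hA1 : ∀ x y z w : V, A x y z w = - A y x z w)
    (hA2 : ∀ x y z w : V, A x y z w = A z w x y)
    (hA3 : ∀ x y z w : V, A x y z w + A y z x w + A z x y w = 0)
    (hK : ∀ x y z w : V, A x y z w = - A (Jt x) (Jt y) z w) :
    ∃ Θ : V →ₗ[ℝ] V →ₗ[ℝ] V →ₗ[ℝ] V →ₗ[ℝ] ℝ,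
      (∀ x y z w : V, Θ x y z w = Θ y x z w) ∧
      (∀ x y z w : V, Θ x y z w = Θ x y w z) ∧
      (∀ x y z w : V, Θ (Jt x) (Jt y) z w = - Θ x y z w) ∧
      (∀ x y z w : V, Θ x (Jt y) z w + Θ y (Jt z) x w + Θ z (Jt x) y w = 0) ∧
      (∀ x y z w : V, Θ x z y w + Θ y w x z - Θ x w y z - Θ y z x w = A x y z w) := by
  -- derived para-Kaehler identities
  have hK2 : ∀ x y z w : V, A (Jt x) (Jt y) z w = - A x y z w := by
    intro x y z w; linarith [hK x y z w]
  have hKm : ∀ x y z w : V, A (Jt x) y z w = - A x (Jt y) z w := by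
    intro x y z w
    have := hK2 x (Jt y) z w
    rwa [hJ2] at this
  -- the tensor Θ, built via mk₂ to keep instance search shallow
  refine ⟨LinearMap.mk₂ ℝ
      (fun x y => (1/4 : ℝ) • (LinearMap.lflip (R₀ := ℝ) (A x) y
          + LinearMap.lflip (R₀ := ℝ) (LinearMap.lflip (R₀ := ℝ) (A x) y)
          - ((LinearMap.lflip (R₀ := ℝ) (A x) y).comp Jt).compl₂ Jt
          - ((LinearMap.lflip (R₀ := ℝ) (LinearMap.lflip (R₀ := ℝ) (A x) y)).comp Jt).compl₂ Jt))
      ?_ ?_ ?_ ?_, ?_, ?_, ?_, ?_, ?_⟩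
  · -- additivity in x
    intro x₁ x₂ y
    ext z w
    simp only [LinearMap.smul_apply, LinearMap.add_apply, LinearMap.sub_apply,
      LinearMap.compl₂_apply, LinearMap.comp_apply, LinearMap.lflip_apply, LinearMap.flip_apply,
      map_add, smul_eq_mul]
    ring
  · -- smul in x
    intro c x y
    ext z w
    simp only [LinearMap.smul_apply, LinearMap.add_apply, LinearMap.sub_apply,
      LinearMap.compl₂_apply, LinearMap.comp_apply, LinearMap.lflip_apply, LinearMap.flip_apply,
      map_smul, smul_eq_mul]
    ring
  · -- additivity in y
    intro x y₁ y₂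
    ext z w
    simp only [LinearMap.smul_apply, LinearMap.add_apply, LinearMap.sub_apply,
      LinearMap.compl₂_apply, LinearMap.comp_apply, LinearMap.lflip_apply, LinearMap.flip_apply,
      map_add, LinearMap.add_apply, smul_eq_mul]
    ring
  · -- smul in y
    intro c x y
    ext z w
    simp only [LinearMap.smul_apply, LinearMap.add_apply, LinearMap.sub_apply,
      LinearMap.compl₂_apply, LinearMap.comp_apply, LinearMap.lflip_apply, LinearMap.flip_apply,
      map_smul, LinearMap.smul_apply, smul_eq_mul]
    ring
  all_goals
    intro x y z w <;>
    simp only [LinearMap.mk₂_apply, LinearMap.smul_apply, LinearMap.add_apply,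
      LinearMap.sub_apply, LinearMap.compl₂_apply, LinearMap.comp_apply,
      LinearMap.lflip_apply, LinearMap.flip_apply, smul_eq_mul]
  · linear_combination (1/4 : ℝ) * (hA2 x z y w) +
      (-1/4 : ℝ) * (hA2 x (Jt z) y (Jt w)) +
      (1/4 : ℝ) * (hA2 x w y z) +
      (-1/4 : ℝ) * (hA2 x (Jt w) y (Jt z))
  · ring
  · linear_combination (-1/4 : ℝ) * (hA3 x (Jt y) w (Jt z)) +
      (1/4 : ℝ) * (hKm x y w (Jt z)) +
      (1/4 : ℝ) * (hA3 x (Jt y) (Jt w) z) +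
      (-1/4 : ℝ) * (hKm x y (Jt w) z) +
      (-1/4 : ℝ) * (hA3 (Jt x) y w (Jt z)) +
      (1/4 : ℝ) * (hA3 (Jt x) y (Jt w) z) +
      (1/4 : ℝ) * (hK x z y w) +
      (1/4 : ℝ) * (hA2 x z (Jt y) (Jt w)) +
      (-1/4 : ℝ) * (hK x z (Jt y) (Jt w)) +
      (-1/4 : ℝ) * (hKm x z y (Jt w)) +
      (-1/4 : ℝ) * (hA2 x (Jt z) (Jt y) w) +
      (1/4 : ℝ) * (hKm x z (Jt y) w) +
      (1/4 : ℝ) * (hA2 (Jt x) z y (Jt w)) +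
      (-1/4 : ℝ) * (hA2 (Jt x) (Jt z) y w) +
      (1/4 : ℝ) * (hK x w y z) +
      (1/4 : ℝ) * (hA1 x w (Jt y) (Jt z)) +
      (-1/4 : ℝ) * (hK x w (Jt y) (Jt z)) +
      (-1/4 : ℝ) * (hKm x w y (Jt z)) +
      (-1/4 : ℝ) * (hA1 x (Jt w) (Jt y) z) +
      (1/4 : ℝ) * (hKm x w (Jt y) z) +
      (1/4 : ℝ) * (hA1 (Jt x) w y (Jt z)) +
      (-1/4 : ℝ) * (hA1 (Jt x) (Jt w) y z)
  · linear_combination (1/2 : ℝ) * (hA3 x y z (Jt w)) +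
      (-1/2 : ℝ) * (hK x y z (Jt w)) +
      (1/2 : ℝ) * (hA1 x y (Jt z) w) +
      (-1/2 : ℝ) * (hA3 x y (Jt z) w) +
      (-1/2 : ℝ) * (hA3 x (Jt y) z w) +
      (1/2 : ℝ) * (hKm x y z w) +
      (-1/2 : ℝ) * (hA3 x (Jt y) (Jt z) (Jt w)) +
      (1/2 : ℝ) * (hKm x y (Jt z) (Jt w)) +
      (-1/4 : ℝ) * (hA1 (Jt x) y z w) +
      (-1/4 : ℝ) * (hA2 (Jt x) y z w) +
      (-1/2 : ℝ) * (hA1 (Jt x) y (Jt z) (Jt w)) +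
      (1/4 : ℝ) * (hA1 (Jt x) (Jt y) z (Jt w)) +
      (1/4 : ℝ) * (hA2 (Jt x) (Jt y) z (Jt w)) +
      (-1/2 : ℝ) * (hA3 x y w (Jt z)) +
      (1/2 : ℝ) * (hK x y w (Jt z)) +
      (-3/4 : ℝ) * (hA3 x (Jt y) w z) +
      (3/4 : ℝ) * (hKm x y w z) +
      (-1/2 : ℝ) * (hA3 x (Jt y) (Jt w) (Jt z)) +
      (1/2 : ℝ) * (hKm x y (Jt w) (Jt z)) +
      (-3/4 : ℝ) * (hA3 (Jt x) y w z) +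
      (-1/2 : ℝ) * (hA3 (Jt x) y (Jt w) (Jt z)) +
      (-1/2 : ℝ) * (hA3 (Jt x) (Jt y) w (Jt z)) +
      (-1/2 : ℝ) * (hA1 x z y (Jt w)) +
      (1/2 : ℝ) * (hK x z y (Jt w)) +
      (1/2 : ℝ) * (hA1 x z (Jt y) w) +
      (-3/4 : ℝ) * (hA2 x z (Jt y) w) +
      (1/2 : ℝ) * (hK x z (Jt y) w) +
      (1/2 : ℝ) * (hA1 x (Jt z) y w) +
      (-1 : ℝ) * (hA2 x (Jt z) y w) +
      (1/2 : ℝ) * (hKm x z y w) +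
      (1/2 : ℝ) * (hA1 x (Jt z) (Jt y) (Jt w)) +
      (-1 : ℝ) * (hA2 x (Jt z) (Jt y) (Jt w)) +
      (1/4 : ℝ) * (hKm x z (Jt y) (Jt w)) +
      (-3/4 : ℝ) * (hA2 (Jt x) z y w) +
      (1/4 : ℝ) * (hA3 (Jt x) z y w) +
      (-1/4 : ℝ) * (hA3 (Jt x) z (Jt y) (Jt w)) +
      (-1/2 : ℝ) * (hA2 (Jt x) (Jt z) y (Jt w)) +
      (-1/2 : ℝ) * (hA2 (Jt x) (Jt z) (Jt y) w) +
      (3/4 : ℝ) * (hA1 x w y (Jt z)) +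
      (-1/2 : ℝ) * (hA2 x w y (Jt z)) +
      (-1/4 : ℝ) * (hK x w y (Jt z)) +
      (3/4 : ℝ) * (hA1 x w (Jt y) z) +
      (-1/2 : ℝ) * (hA2 x w (Jt y) z) +
      (3/4 : ℝ) * (hA2 x (Jt w) y z) +
      (-3/4 : ℝ) * (hKm x w y z) +
      (1/2 : ℝ) * (hA1 x (Jt w) (Jt y) (Jt z)) +
      (-1/4 : ℝ) * (hA2 x (Jt w) (Jt y) (Jt z)) +
      (-1/2 : ℝ) * (hKm x w (Jt y) (Jt z)) +
      (3/4 : ℝ) * (hA1 (Jt x) w y z) +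
      (1/2 : ℝ) * (hA1 (Jt x) w (Jt y) (Jt z)) +
      (1/4 : ℝ) * (hA1 (Jt x) (Jt w) y (Jt z)) +
      (-1/4 : ℝ) * (hA2 y x (Jt z) w) +
      (1/4 : ℝ) * (hA2 y (Jt x) (Jt z) (Jt w)) +
      (1/4 : ℝ) * (hK y z x (Jt w)) +
      (1/4 : ℝ) * (hA2 y (Jt z) w x) +
      (-1/4 : ℝ) * (hA3 y (Jt z) w x) +
      (-1/4 : ℝ) * (hA2 y (Jt z) (Jt w) (Jt x)) +
      (1/4 : ℝ) * (hA3 y (Jt z) (Jt w) (Jt x)) +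
      (-1/2 : ℝ) * (hK y w x (Jt z)) +
      (1/4 : ℝ) * (hA1 y w (Jt z) x) +
      (-1/4 : ℝ) * (hA1 y (Jt w) (Jt z) (Jt x))
  · linear_combination (-1/2 : ℝ) * (hA1 x y z w) +
      (-1/4 : ℝ) * (hA2 x y z w) +
      (1/4 : ℝ) * (hA2 x (Jt y) z (Jt w)) +
      (-1/2 : ℝ) * (hKm x y z (Jt w)) +
      (1/2 : ℝ) * (hA1 (Jt x) y z (Jt w)) +
      (1/4 : ℝ) * (hA1 x y w z) +
      (-1/2 : ℝ) * (hA3 x y w z) +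
      (-1/4 : ℝ) * (hA1 x (Jt y) w (Jt z)) +
      (1/2 : ℝ) * (hKm x y w (Jt z)) +
      (1/4 : ℝ) * (hA1 x (Jt y) (Jt w) z) +
      (-1/4 : ℝ) * (hA3 x (Jt y) (Jt w) z) +
      (-1/4 : ℝ) * (hA1 (Jt x) y w (Jt z)) +
      (-1/4 : ℝ) * (hA3 (Jt x) y w (Jt z)) +
      (-1/4 : ℝ) * (hA2 x z y w) +
      (1/4 : ℝ) * (hK x z y w) +
      (-1/4 : ℝ) * (hA2 (Jt x) (Jt z) y w) +
      (-1/4 : ℝ) * (hA3 x z w y) +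
      (-1/4 : ℝ) * (hA2 x z (Jt w) (Jt y)) +
      (1/4 : ℝ) * (hA3 x z (Jt w) (Jt y)) +
      (1/4 : ℝ) * (hA2 x (Jt z) w (Jt y)) +
      (1/2 : ℝ) * (hA1 x w y z) +
      (-1/4 : ℝ) * (hA2 x w y z) +
      (-1/4 : ℝ) * (hK x w y z) +
      (-1/4 : ℝ) * (hA2 x w (Jt y) (Jt z)) +
      (1/4 : ℝ) * (hA3 x w (Jt y) (Jt z)) +
      (1/4 : ℝ) * (hA1 x (Jt w) (Jt y) z) +
      (-1/4 : ℝ) * (hA3 x (Jt w) (Jt y) z) +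
      (1/4 : ℝ) * (hA1 (Jt x) (Jt w) y z) +
      (1/4 : ℝ) * (hA1 x w z y) +
      (-1/4 : ℝ) * (hA1 x (Jt w) z (Jt y)) +
      (1/4 : ℝ) * (hA2 y x z w) +
      (-1/4 : ℝ) * (hA2 y (Jt x) z (Jt w)) +
      (-1/4 : ℝ) * (hK y z x w) +
      (1/4 : ℝ) * (hA3 y z w x) +
      (1/4 : ℝ) * (hA2 y z (Jt w) (Jt x)) +
      (-1/4 : ℝ) * (hA3 y z (Jt w) (Jt x)) +
      (-1/4 : ℝ) * (hA2 y (Jt z) w (Jt x)) +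
      (1/4 : ℝ) * (hK y w x z) +
      (-1/4 : ℝ) * (hA1 y w z x) +
      (1/4 : ℝ) * (hA1 y (Jt w) z (Jt x))
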